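/- Let X, Y be Banach spaces, F : X → Y be Fréchet differentiable, X̄ ∈ X, and A : Y → X an injective bounded linear operator. Suppose there exist constants Y₀, Z₁, Z₂ ≥ 0 such that ‖A F(X̄)‖ ≤ Y₀, ‖I - A DF(X̄)‖ ≤ Z₁, and ‖A(DF(X̄) - DF(X))‖ ≤ Z₂‖X̄ - X‖ for all X ∈ X. If Z₁ < 1 and (1 - Z₁)² - 2 Z₂ Y₀ > 0, then setting r_min = ((1-Z₁) - √((1-Z₁)² - 2Z₂Y₀))/Z₂ and r_max = (1-Z₁)/Z₂, for every r ∈ [r_min, r_max) there exists a unique X̂ in the closed ball of radius r around X̄ with F(X̂) = 0. -/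

import Mathlib

open Metric Set

set_option maxHeartbeats 1600000 in
/-- Newton–Kantorovich type theorem with a Newton-like operator `X ↦ X - A F(X)`. -/
theorem stmt6 {X Y : Type*} [NormedAddCommGroup X] [NormedSpace ℝ X] [CompleteSpace X]
    [NormedAddCommGroup Y] [NormedSpace ℝ Y]
    (F : X → Y) (DF : X → X →L[ℝ] Y) (hF : ∀ x, HasFDerivAt F (DF x) x)
    (A : Y →L[ℝ] X) (hA : Function.Injective A)
    (Xbar : X) (Y₀ Z₁ Z₂ : ℝ) (hY₀ : 0 ≤ Y₀) (hZ₁ : 0 ≤ Z₁) (hZ₂ : 0 < Z₂)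
    (hbY : ‖A (F Xbar)‖ ≤ Y₀)
    (hbZ1 : ‖ContinuousLinearMap.id ℝ X - A.comp (DF Xbar)‖ ≤ Z₁)
    (hbZ2 : ∀ x : X, ‖A.comp (DF Xbar - DF x)‖ ≤ Z₂ * ‖Xbar - x‖)
    (hZ1lt : Z₁ < 1) (hdisc : 0 < (1 - Z₁) ^ 2 - 2 * Z₂ * Y₀) :
    ∀ r : ℝ, ((1 - Z₁) - Real.sqrt ((1 - Z₁) ^ 2 - 2 * Z₂ * Y₀)) / Z₂ ≤ r →
      r < (1 - Z₁) / Z₂ →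
      ∃! x : X, x ∈ Metric.closedBall Xbar r ∧ F x = 0 := by
  intro r hr1 hr2
  set b : ℝ := 1 - Z₁ with hb
  have hb0 : 0 < b := by simp [hb]; linarith
  set s : ℝ := Real.sqrt (b ^ 2 - 2 * Z₂ * Y₀) with hsdef
  have hs0 : 0 ≤ s := Real.sqrt_nonneg _
  have hs2 : s ^ 2 = b ^ 2 - 2 * Z₂ * Y₀ := Real.sq_sqrt hdisc.le
  have hsb : s ≤ b := by
    have h1 : b ^ 2 - 2 * Z₂ * Y₀ ≤ b ^ 2 := by nlinarith
    have : s ≤ Real.sqrt (b ^ 2) := Real.sqrt_le_sqrt h1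
    simpa [Real.sqrt_sq hb0.le] using this
  have hr1' : b - s ≤ Z₂ * r := by
    have := (div_le_iff₀ hZ₂).mp hr1
    linarith [this]
  have hr2' : Z₂ * r < b := by
    have := (lt_div_iff₀ hZ₂).mp hr2
    linarith [this]
  have hr0 : 0 ≤ r := by nlinarith
  -- the Newton-like operator
  set T : X → X := fun x => x - A (F x) with hT
  have hT' : ∀ x : X, HasFDerivAt T (ContinuousLinearMap.id ℝ X - A.comp (DF x)) x := by
    intro x
    exact (hasFDerivAt_id x).sub (A.hasFDerivAt.comp x (hF x))
  have hDT : ∀ x : X, ‖ContinuousLinearMap.id ℝ X - A.comp (DF x)‖ ≤ Z₁ + Z₂ * ‖Xbar - x‖ := by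
    intro x
    have heq : ContinuousLinearMap.id ℝ X - A.comp (DF x)
        = (ContinuousLinearMap.id ℝ X - A.comp (DF Xbar)) + A.comp (DF Xbar - DF x) := by
      rw [ContinuousLinearMap.comp_sub]; abel
    rw [heq]
    exact (norm_add_le _ _).trans (add_le_add hbZ1 (hbZ2 x))
  -- contraction constant
  set k : ℝ := Z₁ + Z₂ * r with hk
  have hk0 : 0 ≤ k := by positivity
  have hk1 : k < 1 := by simp only [hk]; linarith
  -- Lipschitz on the closed ball
  have hLip : LipschitzOnWith (Real.toNNReal k) T (closedBall Xbar r) := by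
    apply (convex_closedBall Xbar r).lipschitzOnWith_of_nnnorm_hasFDerivWithin_le
      (f' := fun x => ContinuousLinearMap.id ℝ X - A.comp (DF x))
      (fun x _ => (hT' x).hasFDerivWithinAt)
    intro x hx
    rw [← NNReal.coe_le_coe, coe_nnnorm, Real.coe_toNNReal _ hk0]
    refine (hDT x).trans ?_
    have : ‖Xbar - x‖ ≤ r := by
      rw [norm_sub_rev, ← dist_eq_norm]; exact mem_closedBall.mp hx
    nlinarith
  have hLip' : ∀ x ∈ closedBall Xbar r, ∀ y ∈ closedBall Xbar r,
      dist (T x) (T y) ≤ k * dist x y := by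
    intro x hx y hy
    have := hLip.dist_le_mul x hx y hy
    rwa [Real.coe_toNNReal _ hk0] at this
  -- refined estimate: ‖T x - T Xbar‖ ≤ Z₁ ρ + Z₂ ρ²/2
  have hquad : ∀ x ∈ closedBall Xbar r,
      ‖T x - T Xbar‖ ≤ Z₁ * ‖x - Xbar‖ + Z₂ * ‖x - Xbar‖ ^ 2 / 2 := by
    intro x _
    set u : X := x - Xbar with hu
    set g : ℝ → X := fun t => T (Xbar + t • u) - T Xbar with hg
    set g' : ℝ → X := fun t =>
      (ContinuousLinearMap.id ℝ X - A.comp (DF (Xbar + t • u))) u with hg'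
    have hgd : ∀ t : ℝ, HasDerivAt g (g' t) t := by
      intro t
      have hline : HasDerivAt (fun t : ℝ => Xbar + t • u) u t := by
        simpa using ((hasDerivAt_id t).smul_const u).const_add Xbar
      have := (hT' (Xbar + t • u)).comp_hasDerivAt t hline
      simpa [g, g'] using this.sub_const (T Xbar)
    set B : ℝ → ℝ := fun t => Z₁ * ‖u‖ * t + Z₂ * ‖u‖ ^ 2 * (t ^ 2 / 2) with hB
    set B' : ℝ → ℝ := fun t => Z₁ * ‖u‖ + Z₂ * ‖u‖ ^ 2 * t with hB'
    have hBd : ∀ t : ℝ, HasDerivAt B (B' t) t := by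
      intro t
      have h1 : HasDerivAt (fun t : ℝ => Z₁ * ‖u‖ * t) (Z₁ * ‖u‖) t := by
        simpa using (hasDerivAt_id t).const_mul (Z₁ * ‖u‖)
      have h2 : HasDerivAt (fun t : ℝ => Z₂ * ‖u‖ ^ 2 * (t ^ 2 / 2))
          (Z₂ * ‖u‖ ^ 2 * t) t := by
        have := ((hasDerivAt_pow 2 t).div_const 2).const_mul (Z₂ * ‖u‖ ^ 2)
        refine this.congr_deriv ?_
        norm_num
      exact h1.add h2
    have bound : ∀ t ∈ Ico (0 : ℝ) 1, ‖g' t‖ ≤ B' t := by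
      intro t ht
      have hle : ‖g' t‖ ≤ ‖ContinuousLinearMap.id ℝ X - A.comp (DF (Xbar + t • u))‖ * ‖u‖ :=
        (ContinuousLinearMap.id ℝ X - A.comp (DF (Xbar + t • u))).le_opNorm u
      have hnorm : ‖Xbar - (Xbar + t • u)‖ = t * ‖u‖ := by
        rw [show Xbar - (Xbar + t • u) = -(t • u) by abel, norm_neg, norm_smul,
          Real.norm_eq_abs, abs_of_nonneg ht.1]
      refine hle.trans ?_
      have := hDT (Xbar + t • u)
      rw [hnorm] at this
      have hu0 : 0 ≤ ‖u‖ := norm_nonneg u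
      calc ‖ContinuousLinearMap.id ℝ X - A.comp (DF (Xbar + t • u))‖ * ‖u‖
          ≤ (Z₁ + Z₂ * (t * ‖u‖)) * ‖u‖ := by
            exact mul_le_mul_of_nonneg_right this hu0
        _ = B' t := by simp only [B']; ring
    have hcont : ContinuousOn g (Icc (0 : ℝ) 1) :=
      fun t _ => (hgd t).continuousAt.continuousWithinAt
    have hga : ‖g 0‖ ≤ B 0 := by simp [g, B]
    have := image_norm_le_of_norm_deriv_right_le_deriv_boundary hcont
      (fun t ht => (hgd t).hasDerivWithinAt) hga hBd
      (fun t ht => bound t ht) (right_mem_Icc.mpr zero_le_one)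
    simpa [g, B, u, div_eq_mul_inv] using this
  -- T maps the ball into itself
  have hmaps : ∀ x ∈ closedBall Xbar r, T x ∈ closedBall Xbar r := by
    intro x hx
    have hρ : ‖x - Xbar‖ ≤ r := by rw [← dist_eq_norm]; exact mem_closedBall.mp hx
    have hρ0 : 0 ≤ ‖x - Xbar‖ := norm_nonneg _
    have h1 : ‖T x - Xbar‖ ≤ ‖T x - T Xbar‖ + ‖T Xbar - Xbar‖ := by
      have : T x - Xbar = (T x - T Xbar) + (T Xbar - Xbar) := by abel
      rw [this]; exact norm_add_le _ _
    have h2 : ‖T Xbar - Xbar‖ ≤ Y₀ := by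
      simpa [T, hT] using hbY
    have h3 : ‖T x - Xbar‖ ≤ Z₁ * r + Z₂ * r ^ 2 / 2 + Y₀ := by
      have h4 := hquad x hx
      have h5 : ‖x - Xbar‖ ^ 2 ≤ r ^ 2 := by nlinarith
      nlinarith [mul_le_mul_of_nonneg_left h5 hZ₂.le, mul_le_mul_of_nonneg_left hρ hZ₁]
    have h6 : (b - Z₂ * r) ^ 2 ≤ s ^ 2 := by nlinarith
    have h7 : Z₂ ^ 2 * r ^ 2 - 2 * b * Z₂ * r + 2 * Z₂ * Y₀ ≤ 0 := by nlinarith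
    have hkey : Y₀ + Z₁ * r + Z₂ * r ^ 2 / 2 ≤ r := by nlinarith [h7, hZ₂, mul_pos hZ₂ hZ₂]
    rw [mem_closedBall, dist_eq_norm]
    linarith
  -- set up the contraction on the closed ball as a complete metric space
  haveI : Nonempty (closedBall Xbar r) := ⟨⟨Xbar, mem_closedBall_self hr0⟩⟩
  haveI : CompleteSpace (closedBall Xbar r) :=
    (Metric.isClosed_closedBall (x := Xbar) (ε := r)).completeSpace_coe
  set T' : closedBall Xbar r → closedBall Xbar r :=
    fun p => ⟨T p.1, hmaps p.1 p.2⟩ with hT'def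
  have hC : ContractingWith (Real.toNNReal k) T' := by
    constructor
    · rwa [← NNReal.coe_lt_one, Real.coe_toNNReal _ hk0]
    · intro p q
      exact hLip p.2 q.2
  -- fixed points of T correspond to zeros of F
  have hfix_iff : ∀ x : X, T x = x ↔ F x = 0 := by
    intro x
    constructor
    · intro h
      have h' : x - A (F x) = x := h
      have h0 : A (F x) = 0 := sub_eq_self.mp h'
      exact hA (h0.trans (map_zero A).symm)
    · intro h; simp [T, h]
  obtain ⟨xhat, hxhat⟩ : ∃ p : closedBall Xbar r, T' p = p :=
    ⟨ContractingWith.fixedPoint T' hC, hC.fixedPoint_isFixedPt⟩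
  have hTxhat : T xhat.1 = xhat.1 := congrArg Subtype.val hxhat
  refine ⟨xhat.1, ⟨xhat.2, (hfix_iff xhat.1).mp hTxhat⟩, ?_⟩
  intro y ⟨hy1, hy2⟩
  have hTy : T y = y := (hfix_iff y).mpr hy2
  have : dist y xhat.1 ≤ k * dist y xhat.1 := by
    calc dist y xhat.1 = dist (T y) (T xhat.1) := by rw [hTy, hTxhat]
      _ ≤ k * dist y xhat.1 := hLip' y hy1 xhat.1 xhat.2
  have hd0 : dist y xhat.1 ≤ 0 := by nlinarith [dist_nonneg (x := y) (y := xhat.1)]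
  have := le_antisymm hd0 dist_nonneg
  exact dist_eq_zero.mp this
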